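/- Let a, c ∈ ℂ and let u, y : ℝ → ℤ → ℂ be differentiable in x, with yₙ + yₙ₋₁ ≠ 0 and yₙ₊₁ + yₙ ≠ 0 for all n, satisfying for all n: uₙ(yₙ₊₁ + yₙ)(yₙ + yₙ₋₁) = −4a²yₙ² + c² and ∂ₓyₙ = uₙ(yₙ₊₁ − yₙ₋₁). Define fₙ = (a·yₙ − a·yₙ₋₁ + c)/(yₙ + yₙ₋₁). Then fₙ satisfies the modified Volterra lattice: ∂ₓfₙ = (fₙ² − a²)(fₙ₊₁ − fₙ₋₁) for all n. -/

import Mathlib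

/-- the Miura variable `fₙ = (ayₙ − ayₙ₋₁ + c)/(yₙ + yₙ₋₁)`
satisfies the modified Volterra lattice `∂ₓfₙ = (fₙ² − a²)(fₙ₊₁ − fₙ₋₁)`. -/
theorem volterra_modified_lattice
    (a c : ℂ) (u y : ℝ → ℤ → ℂ)
    (hudiff : ∀ n : ℤ, Differentiable ℝ (fun x => u x n))
    (hydiff : ∀ n : ℤ, Differentiable ℝ (fun x => y x n))
    (hden : ∀ (x : ℝ) (n : ℤ), y x n + y x (n - 1) ≠ 0)
    (hden' : ∀ (x : ℝ) (n : ℤ), y x (n + 1) + y x n ≠ 0)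
    (hconstraint : ∀ (x : ℝ) (n : ℤ),
      u x n * (y x (n + 1) + y x n) * (y x n + y x (n - 1))
        = -4 * a ^ 2 * (y x n) ^ 2 + c ^ 2)
    (hyx : ∀ (x : ℝ) (n : ℤ), HasDerivAt (fun x => y x n)
      (u x n * (y x (n + 1) - y x (n - 1))) x)
    (f : ℝ → ℤ → ℂ)
    (hf : ∀ (x : ℝ) (n : ℤ), f x n =
      (a * y x n - a * y x (n - 1) + c) / (y x n + y x (n - 1))) :
    ∀ (x : ℝ) (n : ℤ), HasDerivAt (fun x => f x n)
      (((f x n) ^ 2 - a ^ 2) * (f x (n + 1) - f x (n - 1))) x := by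
  intro x n
  have e1 : n - 1 + 1 = n := by ring
  have h1 := hyx x n
  have h2 := hyx x (n - 1)
  rw [e1] at h2
  have hfn : (fun x => f x n)
      = fun x => (a * y x n - a * y x (n - 1) + c) / (y x n + y x (n - 1)) :=
    funext fun x => hf x n
  rw [hfn]
  have hN : HasDerivAt (fun x => a * y x n - a * y x (n - 1) + c)
      (a * (u x n * (y x (n + 1) - y x (n - 1)))
        - a * (u x (n - 1) * (y x n - y x (n - 1 - 1)))) x :=
    ((h1.const_mul a).sub (h2.const_mul a)).add_const c
  have hD : HasDerivAt (fun x => y x n + y x (n - 1))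
      (u x n * (y x (n + 1) - y x (n - 1))
        + u x (n - 1) * (y x n - y x (n - 1 - 1))) x := h1.add h2
  have hdiv := hN.div hD (hden x n)
  refine hdiv.congr_deriv ?_
  rw [hf x (n + 1), hf x (n - 1), hf x n]
  simp only [add_sub_cancel_right]
  have hu0 : u x n = (-4 * a ^ 2 * (y x n) ^ 2 + c ^ 2)
      / ((y x (n + 1) + y x n) * (y x n + y x (n - 1))) := by
    rw [eq_div_iff (mul_ne_zero (hden' x n) (hden x n))]
    linear_combination hconstraint x n
  have hu1 : u x (n - 1) = (-4 * a ^ 2 * (y x (n - 1)) ^ 2 + c ^ 2)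
      / ((y x n + y x (n - 1)) * (y x (n - 1) + y x (n - 1 - 1))) := by
    have h := hconstraint x (n - 1)
    rw [e1] at h
    rw [eq_div_iff (mul_ne_zero (hden x n) (hden x (n - 1)))]
    linear_combination h
  rw [hu0, hu1]
  have d1 := hden x n
  have d2 := hden x (n - 1)
  have d3 := hden' x n
  field_simp
  ring
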